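/- Let S, T, Z be closed subspaces of a complex Hilbert space H such that Z ∔ S = H and Z ∔ T = H (i.e., Z is a common complement of S and T). Then there exist invertible operators G, K ∈ B(H) with G(Z) = Z, K(Z) = Z, G(Z^⊥) = S and K(Z^⊥) = T. (This asserts the surjectivity of the map 𝔭(Z, G, K) = (G(Z^⊥), K(Z^⊥)) onto the set Δ of pairs of closed subspaces admitting a common complement.) -/

import Mathlib

open Submodule

private lemma exists_G_of_isCompl {H : Type*} [NormedAddCommGroup H]
    [InnerProductSpace ℂ H] [CompleteSpace H]
    (S Z : Submodule ℂ H)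
    (hS : IsClosed (S : Set H)) (hZ : IsClosed (Z : Set H))
    (hZS : IsCompl Z S) :
    ∃ G : (H →L[ℂ] H)ˣ,
      Submodule.map ((G : H →L[ℂ] H) : H →ₗ[ℂ] H) Z = Z ∧
      Submodule.map ((G : H →L[ℂ] H) : H →ₗ[ℂ] H) Zᗮ = S := by
  haveI := hZ.completeSpace_coe
  haveI := hS.completeSpace_coe
  have hZperp : IsCompl Z Zᗮ := Z.isCompl_orthogonal_of_hasOrthogonalProjection
  have hZperpC : IsClosed ((Zᗮ : Submodule ℂ H) : Set H) := Z.isClosed_orthogonal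
  -- the continuous projection onto S along Z
  set P : H →L[ℂ] S := S.linearProjOfClosedCompl Z hZS.symm hS hZ with hP
  have hPcoe : ⇑P = ⇑(S.linearProjOfIsCompl Z hZS.symm) := by
    rfl
  -- f : Zᗮ → S, the restriction of P
  set f : Zᗮ →L[ℂ] S := P.comp Zᗮ.subtypeL with hf
  have hfapp : ∀ w : Zᗮ, (f w : H) = S.linearProjOfIsCompl Z hZS.symm (w : H) := by
    intro w; simp [hf, hPcoe]
  have hinj : f.ker = ⊥ := by
    rw [LinearMap.ker_eq_bot']
    intro w hw
    have : ((w : H)) ∈ Z := by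
      have := congrArg (Subtype.val) hw
      rw [ContinuousLinearMap.coe_coe, hfapp] at this
      exact (Submodule.linearProjOfIsCompl_apply_eq_zero_iff hZS.symm).1
        (Subtype.ext this)
    have : (w : H) ∈ Z ⊓ Zᗮ := ⟨this, w.2⟩
    rw [hZperp.inf_eq_bot] at this
    exact Subtype.ext this
  have hsurj : f.range = ⊤ := by
    rw [LinearMap.range_eq_top]
    intro s
    obtain ⟨z, hz, w, hw, hzw⟩ : ∃ z ∈ Z, ∃ w ∈ Zᗮ, z + w = (s : H) := by
      have : (s : H) ∈ Z ⊔ Zᗮ := by rw [hZperp.sup_eq_top]; trivial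
      exact Submodule.mem_sup.1 this |>.imp fun z hz => by
        obtain ⟨hz, w, hw, hzw⟩ := hz; exact ⟨hz, w, hw, hzw⟩
    refine ⟨⟨w, hw⟩, ?_⟩
    apply Subtype.ext
    rw [ContinuousLinearMap.coe_coe, hfapp]
    have h1 : S.linearProjOfIsCompl Z hZS.symm z = 0 :=
      Submodule.linearProjOfIsCompl_apply_right' hZS.symm hz
    have h2 : S.linearProjOfIsCompl Z hZS.symm (s : H) = s :=
      Submodule.linearProjOfIsCompl_apply_left hZS.symm s
    have := congrArg (S.linearProjOfIsCompl Z hZS.symm) hzw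
    rw [map_add, h1, zero_add, h2] at this
    rw [this]
  -- u : Zᗮ ≃L S
  set u : Zᗮ ≃L[ℂ] S := ContinuousLinearEquiv.ofBijective f hinj hsurj with hu
  have huapp : ∀ w : Zᗮ, u w = f w := fun w => rfl
  set e1 : (Z × Zᗮ) ≃L[ℂ] H := Z.prodEquivOfClosedCompl Zᗮ hZperp hZ hZperpC with he1
  set e2 : (Z × S) ≃L[ℂ] H := Z.prodEquivOfClosedCompl S hZS hZ hS with he2
  set G : H ≃L[ℂ] H :=
    (e1.symm.trans ((ContinuousLinearEquiv.refl ℂ Z).prodCongr u)).trans e2 with hG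
  have hGapp : ∀ x : H, G x =
      e2 (((e1.symm x).1 : Z), u (e1.symm x).2) := fun x => rfl
  have hGZ : ∀ z ∈ Z, G z = z := by
    intro z hz
    have h1 : e1.symm z = (⟨z, hz⟩, 0) := by
      have : (Z.prodEquivOfIsCompl Zᗮ hZperp).symm z = (⟨z, hz⟩, 0) :=
        Submodule.prodEquivOfIsCompl_symm_apply_left (p := Z) (q := Zᗮ) hZperp ⟨z, hz⟩
      simpa [he1, Submodule.coe_prodEquivOfClosedCompl_symm] using this
    rw [hGapp, h1]
    simp [he2, Submodule.coe_prodEquivOfClosedCompl,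
      Submodule.coe_prodEquivOfIsCompl']
  have hGW : ∀ w : Zᗮ, G w = u w := by
    intro w
    have h1 : e1.symm w = (0, w) := by
      have : (Z.prodEquivOfIsCompl Zᗮ hZperp).symm w = (0, w) :=
        Submodule.prodEquivOfIsCompl_symm_apply_right (p := Z) (q := Zᗮ) hZperp w
      simp only [he1, Submodule.coe_prodEquivOfClosedCompl_symm]; exact this
    rw [hGapp, h1]
    simp [he2, Submodule.coe_prodEquivOfClosedCompl,
      Submodule.coe_prodEquivOfIsCompl']
  refine ⟨G.toUnit, ?_, ?_⟩
  · apply le_antisymm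
    · rintro x ⟨z, hz, rfl⟩
      have : (G.toUnit : H →L[ℂ] H) z = G z := rfl
      rw [ContinuousLinearMap.coe_coe, this, hGZ z hz]; exact hz
    · intro z hz
      exact ⟨z, hz, hGZ z hz⟩
  · apply le_antisymm
    · rintro x ⟨w, hw, rfl⟩
      have : (G.toUnit : H →L[ℂ] H) w = G w := rfl
      rw [ContinuousLinearMap.coe_coe, this, hGW ⟨w, hw⟩]
      exact (u ⟨w, hw⟩).2
    · intro s hs
      refine ⟨(u.symm ⟨s, hs⟩ : H), (u.symm ⟨s, hs⟩).2, ?_⟩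
      have : (G.toUnit : H →L[ℂ] H) (u.symm ⟨s, hs⟩ : H) = G (u.symm ⟨s, hs⟩ : H) := rfl
      rw [ContinuousLinearMap.coe_coe, this, hGW (u.symm ⟨s, hs⟩)]
      simp

/-- If `Z` is a common complement of closed subspaces `S` and `T`, then there
exist invertible operators `G, K` with `G(Z) = Z`, `K(Z) = Z`, `G(Zᗮ) = S` and
`K(Zᗮ) = T` (surjectivity of the map `𝔭(Z, G, K) = (G(Zᗮ), K(Zᗮ))` onto `Δ`). -/
theorem exists_GK_onto_common_complement_pair {H : Type*} [NormedAddCommGroup H]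
    [InnerProductSpace ℂ H] [CompleteSpace H]
    (S T Z : Submodule ℂ H)
    (hS : IsClosed (S : Set H)) (hT : IsClosed (T : Set H)) (hZ : IsClosed (Z : Set H))
    (hZS : IsCompl Z S) (hZT : IsCompl Z T) :
    ∃ G K : (H →L[ℂ] H)ˣ,
      Submodule.map ((G : H →L[ℂ] H) : H →ₗ[ℂ] H) Z = Z ∧
      Submodule.map ((K : H →L[ℂ] H) : H →ₗ[ℂ] H) Z = Z ∧
      Submodule.map ((G : H →L[ℂ] H) : H →ₗ[ℂ] H) Zᗮ = S ∧
      Submodule.map ((K : H →L[ℂ] H) : H →ₗ[ℂ] H) Zᗮ = T := by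
  obtain ⟨G, hG1, hG2⟩ := exists_G_of_isCompl S Z hS hZ hZS
  obtain ⟨K, hK1, hK2⟩ := exists_G_of_isCompl T Z hT hZ hZT
  exact ⟨G, K, hG1, hK1, hG2, hK2⟩
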